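/- Let $E$ be a complete space with an order unit (order-norm Banach), $F$ a vector space with an order unit, and $\mathcal{H}$ a family of weakly additive, order-preserving operators $T\colon E \to F$ such that each orbit $\{T(x) : T \in \mathcal{H}\}$ is bounded in $F$. Then $\mathcal{H}$ is equicontinuous. -/

import Mathlib

/-- The order norm `‖x‖ = inf {c > 0 : -c•e ≤ x ≤ c•e}` of a space with order unit `e`. -/
noncomputable def ordNorm {L : Type*} [AddCommGroup L] [PartialOrder L] [Module ℝ L]
    (e x : L) : ℝ :=
  sInf {c : ℝ | 0 < c ∧ -(c • e) ≤ x ∧ x ≤ c • e}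

/-- `e` is an order unit: every element is bounded by a multiple of `e`. -/
def IsOrderUnit {L : Type*} [AddCommGroup L] [PartialOrder L] [Module ℝ L] (e : L) : Prop :=
  ∀ x : L, ∃ l : ℝ, 0 < l ∧ -(l • e) ≤ x ∧ x ≤ l • e

/-- The space is Archimedean with respect to the order unit `e`. -/
def IsArch {L : Type*} [AddCommGroup L] [PartialOrder L] [Module ℝ L] (e : L) : Prop :=
  ∀ x : L, (∀ n : ℕ, 0 < n → (n : ℝ) • x ≤ e) → x ≤ 0

/-- An operator `T` is weakly additive with respect to the order unit `e`. -/
def WAddOp {L M : Type*} [AddCommGroup L] [Module ℝ L] [AddCommGroup M] [Module ℝ M]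
    (e : L) (T : L → M) : Prop :=
  ∀ x : L, ∀ l : ℝ, T (x + l • e) = T x + l • T e

/-- The ball of radius `δ` around `z` in the order norm. -/
def ordBall {L : Type*} [AddCommGroup L] [PartialOrder L] [Module ℝ L]
    (e z : L) (δ : ℝ) : Set L :=
  {y : L | ordNorm e (y - z) < δ}

/-- The order topology, generated by the order-norm balls. -/
noncomputable def ordTop {L : Type*} [AddCommGroup L] [PartialOrder L] [Module ℝ L]
    (e : L) : TopologicalSpace L :=
  TopologicalSpace.generateFrom {s : Set L | ∃ z : L, ∃ δ : ℝ, 0 < δ ∧ s = ordBall e z δ}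

/-- `A` is of the second category: it is not contained in a countable union
of nowhere dense sets. -/
def SecondCategory {X : Type*} (t : TopologicalSpace X) (A : Set X) : Prop :=
  ¬ ∃ f : ℕ → Set X, (∀ n, @interior X t (@closure X t (f n)) = ∅) ∧ A ⊆ ⋃ n, f n

/-- The space with order unit `e` is complete (Banach) in its order norm:
every Cauchy sequence converges. -/
def OrdComplete {L : Type*} [AddCommGroup L] [PartialOrder L] [Module ℝ L] (e : L) : Prop :=
  ∀ u : ℕ → L,
    (∀ ε : ℝ, 0 < ε → ∃ N : ℕ, ∀ m ≥ N, ∀ n ≥ N, ordNorm e (u m - u n) < ε) →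
    ∃ x : L, ∀ ε : ℝ, 0 < ε → ∃ N : ℕ, ∀ n ≥ N, ordNorm e (u n - x) < ε

/-- If the order norm is `< d`, there is a witness `c < d` in the defining set. -/
lemma ordNorm_lt_witness {L : Type*} [AddCommGroup L] [PartialOrder L] [Module ℝ L]
    (e : L) (hu : IsOrderUnit e) (x : L) {d : ℝ} (h : ordNorm e x < d) :
    ∃ c : ℝ, 0 < c ∧ c < d ∧ -(c • e) ≤ x ∧ x ≤ c • e := by
  obtain ⟨c, hc, hcd⟩ := exists_lt_of_csInf_lt (hu x) h
  exact ⟨c, hc.1, hcd, hc.2.1, hc.2.2⟩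

theorem stmt14 {E F : Type*}
    [AddCommGroup E] [PartialOrder E] [IsOrderedAddMonoid E] [Module ℝ E]
    [PosSMulStrictMono ℝ E] [PosSMulReflectLT ℝ E]
    [AddCommGroup F] [PartialOrder F] [IsOrderedAddMonoid F] [Module ℝ F]
    [PosSMulStrictMono ℝ F] [PosSMulReflectLT ℝ F]
    (eE : E) (eF : F) (huE : IsOrderUnit eE) (haE : IsArch eE)
    (huF : IsOrderUnit eF) (haF : IsArch eF)
    (hcomp : OrdComplete eE)
    (H : Set (E → F)) (hH : ∀ T ∈ H, WAddOp eE T ∧ Monotone T)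
    (hbdd : ∀ x : E, ∃ M : ℝ, ∀ T ∈ H, ordNorm eF (T x) ≤ M) :
    ∀ ε : ℝ, 0 < ε → ∃ δ : ℝ, 0 < δ ∧
      ∀ T ∈ H, ∀ x : E, ordNorm eE x < δ → ordNorm eF (T x) < ε := by
  intro ε hε
  obtain ⟨M, hM⟩ := hbdd eE
  set K : ℝ := max M 0 + 1 with hKdef
  have hK0 : 0 < K := by positivity
  refine ⟨ε / (2 * K), by positivity, ?_⟩
  intro T hT x hx
  obtain ⟨hw, hm⟩ := hH T hT
  -- weak additivity forces `T 0 = 0`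
  have hT0 : T 0 = 0 := by
    have h1 := hw 0 1
    simp only [zero_add, one_smul] at h1
    have h2 : T 0 + T eE = 0 + T eE := by rw [← h1, zero_add]
    exact add_right_cancel h2
  -- eF is nonnegative
  have heF : (0 : F) ≤ eF := by
    obtain ⟨l, hl, -, h2⟩ := huF 0
    have h3 : (0 : F) ≤ l⁻¹ • (l • eF) := smul_nonneg (by positivity) h2
    rwa [smul_smul, inv_mul_cancel₀ hl.ne', one_smul] at h3
  -- bound `T eE` by `K • eF`
  have hTe : ordNorm eF (T eE) < K := lt_of_le_of_lt (hM T hT)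
    (by rw [hKdef]; have := le_max_left M (0:ℝ); linarith)
  obtain ⟨c, hc0, hcK, hcl, hcu⟩ := ordNorm_lt_witness eF huF (T eE) hTe
  have hup : T eE ≤ K • eF := by
    have h4 : (0:F) ≤ (K - c) • eF := smul_nonneg (by linarith) heF
    rw [sub_smul] at h4
    calc T eE ≤ c • eF := hcu
    _ ≤ K • eF := by have := sub_nonneg.mp h4; exact this
  have hlo : -(K • eF) ≤ T eE := by
    have h4 : (0:F) ≤ (K - c) • eF := smul_nonneg (by linarith) heF
    rw [sub_smul] at h4
    calc -(K • eF) ≤ -(c • eF) := neg_le_neg (sub_nonneg.mp h4)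
    _ ≤ T eE := hcl
  -- bound `x` by `c' • eE` with `c' < ε / (2K)`
  obtain ⟨c', hc'0, hc'δ, hxl, hxu⟩ := ordNorm_lt_witness eE huE x hx
  -- images of the multiples of `eE`
  have hTpos : T (c' • eE) = c' • T eE := by
    have := hw 0 c'; rwa [zero_add, hT0, zero_add] at this
  have hTneg : T (-(c' • eE)) = -(c' • T eE) := by
    have := hw 0 (-c')
    rwa [zero_add, hT0, zero_add, neg_smul, neg_smul] at this
  -- the resulting bounds on `T x`
  have hub : T x ≤ (c' * K) • eF := by
    calc T x ≤ T (c' • eE) := hm hxu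
    _ = c' • T eE := hTpos
    _ ≤ c' • (K • eF) := smul_le_smul_of_nonneg_left hup hc'0.le
    _ = (c' * K) • eF := by rw [smul_smul]
  have hlb : -((c' * K) • eF) ≤ T x := by
    calc -((c' * K) • eF) = -(c' • (K • eF)) := by rw [smul_smul]
    _ ≤ -(c' • T eE) := neg_le_neg (smul_le_smul_of_nonneg_left hup hc'0.le)
    _ = T (-(c' • eE)) := hTneg.symm
    _ ≤ T x := hm hxl
  -- conclude
  have hmem : c' * K ∈ {c : ℝ | 0 < c ∧ -(c • eF) ≤ T x ∧ T x ≤ c • eF} :=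
    ⟨mul_pos hc'0 hK0, hlb, hub⟩
  have hbd : BddBelow {c : ℝ | 0 < c ∧ -(c • eF) ≤ T x ∧ T x ≤ c • eF} :=
    ⟨0, fun c hc => hc.1.le⟩
  have h7 : ordNorm eF (T x) ≤ c' * K := csInf_le hbd hmem
  have h8 : c' * K < ε := by
    have h9 : c' * (2 * K) < ε := (lt_div_iff₀ (by positivity)).mp hc'δ
    nlinarith
  linarith
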